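/- arXiv:2102.11071 — 2 statements merged into one kernel-verified Lean document; each statement's English description precedes it below -/
import Mathlib

section
/- The spectral radius of the next-generation matrix K = F V⁻¹ for the COVID-19 vaccination model, where F is the 4×4 matrix with nonzero entries F₁₃ = β_A S*/N*, F₁₄ = β_I S*/N*, F₂₃ = β_A(1-ψ)V*/N*, F₂₄ = β_I(1-ψ)V*/N*, and V is the 4×4 matrix with rows (k,0,0,0), (0,k,0,0), (-(1-p)k, -(1-p̃)k, γ_A, 0), (-pk, -p̃k, 0, γ+η+μ), equals, in the case p = p̃, R_e = (S*/N* + (1-ψ)V*/N*)·R₀ where R₀ = (1-p)β_A/γ_A + p β_I/(γ+η+μ). -/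
open Matrix Polynomial

set_option maxHeartbeats 800000 in
private lemma aux_charpoly (a b c13 c14 c23 c24 : ℂ) :
    (!![a, a, c13, c14; b, b, c23, c24; 0,0,0,0; 0,0,0,0] :
      Matrix (Fin 4) (Fin 4) ℂ).charpoly = X ^ 3 * (X - C (a + b)) := by
  rw [Matrix.charpoly]
  have hch : charmatrix (!![a, a, c13, c14; b, b, c23, c24; 0,0,0,0; 0,0,0,0] :
      Matrix (Fin 4) (Fin 4) ℂ) =
      !![X - C a, -C a, -C c13, -C c14; -C b, X - C b, -C c23, -C c24;
         0, 0, X, 0; 0, 0, 0, X] := by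
    ext i j
    fin_cases i <;> fin_cases j <;>
      simp [Matrix.charmatrix_apply, Matrix.one_apply, Matrix.vecHead, Matrix.vecTail]
  rw [hch]
  simp [Matrix.det_succ_row_zero, Fin.sum_univ_succ, Matrix.vecHead, Matrix.vecTail,
    Fin.succAbove]
  ring

set_option maxHeartbeats 1000000 in
/-- The spectral radius of the next-generation matrix `K = F V⁻¹` equals
`R_e = (S*/N* + (1-ψ)V*/N*) · R₀` (case `p = p̃`), where the spectral radius
is the largest absolute value of the (complex) eigenvalues of `K`. -/
theorem next_generation_spectral_radius
    (k γA γ η μ βA βI p ψ Sstar Vstar Nstar : ℝ)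
    (hk : 0 < k) (hγA : 0 < γA) (hδ : 0 < γ + η + μ)
    (hβA : 0 ≤ βA) (hβI : 0 ≤ βI) (hp : 0 ≤ p) (hp1 : p ≤ 1)
    (hψ : 0 ≤ ψ) (hψ1 : ψ ≤ 1) (hS : 0 ≤ Sstar) (hV : 0 ≤ Vstar)
    (hN : 0 < Nstar)
    (F V : Matrix (Fin 4) (Fin 4) ℝ)
    (hF : F = !![0, 0, βA * Sstar / Nstar, βI * Sstar / Nstar;
                 0, 0, βA * (1 - ψ) * Vstar / Nstar, βI * (1 - ψ) * Vstar / Nstar;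
                 0, 0, 0, 0;
                 0, 0, 0, 0])
    (hV' : V = !![k, 0, 0, 0;
                  0, k, 0, 0;
                  -(1 - p) * k, -(1 - p) * k, γA, 0;
                  -(p * k), -(p * k), 0, γ + η + μ]) :
    IsGreatest
      {r : ℝ | ∃ z : ℂ, ((F * V⁻¹).map (algebraMap ℝ ℂ)).charpoly.IsRoot z ∧
        r = ‖z‖}
      ((Sstar / Nstar + (1 - ψ) * Vstar / Nstar) *
        ((1 - p) * βA / γA + p * βI / (γ + η + μ))) := by
  have hk' := hk.ne'
  have hγA' := hγA.ne'
  have hδ' := hδ.ne'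
  have hN' := hN.ne'
  set d : ℝ := γ + η + μ with hd
  set a : ℝ := βA * Sstar / Nstar * ((1-p)/γA) + βI * Sstar / Nstar * (p/d) with ha
  set b : ℝ := βA * (1-ψ) * Vstar / Nstar * ((1-p)/γA) + βI * (1-ψ) * Vstar / Nstar * (p/d)
    with hb
  have hVinv : V⁻¹ = !![1/k, 0, 0, 0;
             0, 1/k, 0, 0;
             (1-p)/γA, (1-p)/γA, 1/γA, 0;
             p/d, p/d, 0, 1/d] := by
    apply Matrix.inv_eq_right_inv
    subst hV'
    ext i j
    fin_cases i <;> fin_cases j <;>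
      simp [Matrix.mul_apply, Fin.sum_univ_four, Matrix.one_apply, Matrix.vecHead,
        Matrix.vecTail] <;>
      field_simp <;>
      ring
  have hK : F * V⁻¹ = !![a, a, βA * Sstar / Nstar * (1/γA), βI * Sstar / Nstar * (1/d);
                         b, b, βA * (1-ψ) * Vstar / Nstar * (1/γA),
                           βI * (1-ψ) * Vstar / Nstar * (1/d);
                         0, 0, 0, 0; 0, 0, 0, 0] := by
    rw [hVinv, hF]
    ext i j
    fin_cases i <;> fin_cases j <;>
      simp [Matrix.mul_apply, Fin.sum_univ_four, ha, hb, Matrix.vecHead, Matrix.vecTail]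
  have hKc : (F * V⁻¹).map (algebraMap ℝ ℂ) =
      !![(a:ℂ), (a:ℂ), ((βA * Sstar / Nstar * (1/γA) : ℝ) : ℂ),
           ((βI * Sstar / Nstar * (1/d) : ℝ) : ℂ);
         (b:ℂ), (b:ℂ), ((βA * (1-ψ) * Vstar / Nstar * (1/γA) : ℝ) : ℂ),
           ((βI * (1-ψ) * Vstar / Nstar * (1/d) : ℝ) : ℂ);
         0, 0, 0, 0; 0, 0, 0, 0] := by
    rw [hK]
    ext i j
    fin_cases i <;> fin_cases j <;> simp [Matrix.map_apply, Matrix.vecHead, Matrix.vecTail]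
  have hcp : ((F * V⁻¹).map (algebraMap ℝ ℂ)).charpoly =
      X ^ 3 * (X - C ((a : ℂ) + b)) := by
    rw [hKc, aux_charpoly]
  have hRe : (Sstar / Nstar + (1 - ψ) * Vstar / Nstar) *
        ((1 - p) * βA / γA + p * βI / (γ + η + μ)) = a + b := by
    rw [ha, hb, ← hd]; ring
  have hRnn : 0 ≤ a + b := by
    rw [← hRe]
    have h1 : 0 ≤ 1 - p := by linarith
    have h2 : 0 ≤ 1 - ψ := by linarith
    positivity
  have hroot : ∀ z : ℂ, ((F * V⁻¹).map (algebraMap ℝ ℂ)).charpoly.IsRoot z ↔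
      (z = 0 ∨ z = ((a : ℂ) + b)) := by
    intro z
    rw [hcp]
    simp [IsRoot, sub_eq_zero, pow_eq_zero_iff]
  rw [hRe]
  constructor
  · exact ⟨((a : ℂ) + b), by rw [hroot]; right; rfl, by
      rw [← Complex.ofReal_add, Complex.norm_real, Real.norm_of_nonneg hRnn]⟩
  · rintro r ⟨z, hz, rfl⟩
    rcases (hroot z).1 hz with h | h
    · simp only [h, norm_zero]; exact hRnn
    · rw [h, ← Complex.ofReal_add, Complex.norm_real, Real.norm_of_nonneg hRnn]
end

section
/- The Jacobian of the linearized infection subsystem F - V of the COVID-19 model (with p = p̃) has all eigenvalues with negative real part if and only if R_e = (s + v)·R₀ < 1, where s = S*/N*, v = (1-ψ)V*/N*, and R₀ = (1-p)β_A/γ_A + p β_I/δ with δ = γ+η+μ. -/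
set_option maxHeartbeats 1000000

open Matrix Polynomial

private theorem cubic_hurwitz (a b c : ℝ) (ha : 0 < a) (hb : 0 < b) (hc : 0 < c)
    (habc : c < a * b) (z : ℂ)
    (hz : z^3 + (a:ℂ) * z^2 + (b:ℂ) * z + (c:ℂ) = 0) : z.re < 0 := by
  by_contra h
  push_neg at h
  have hre := congrArg Complex.re hz
  have him := congrArg Complex.im hz
  simp only [Complex.add_re, Complex.add_im, Complex.mul_re, Complex.mul_im,
    Complex.ofReal_re, Complex.ofReal_im, Complex.zero_re, Complex.zero_im,
    pow_succ, pow_zero, Complex.one_re, Complex.one_im,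
    zero_mul, mul_zero, sub_zero, zero_sub, add_zero, zero_add, one_mul] at hre him
  rcases eq_or_ne z.im 0 with hy | hy
  · rw [hy] at hre
    nlinarith [pow_nonneg h 3, pow_nonneg h 2]
  · have h3 : z.im * (3 * z.re^2 + 2 * a * z.re + b - z.im^2) = 0 := by
      linear_combination him
    have hy2 : z.im ^ 2 = 3 * z.re^2 + 2 * a * z.re + b := by
      rcases mul_eq_zero.1 h3 with h4 | h4
      · exact absurd h4 hy
      · linarith
    have key : -8 * z.re^3 - 8 * a * z.re^2 - 2 * (a^2 + b) * z.re + (c - a*b) = 0 := by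
      linear_combination hre + (3 * z.re + a) * hy2
    nlinarith [pow_nonneg h 3, pow_nonneg h 2, mul_nonneg (mul_nonneg ha.le h) h]

private theorem charpoly_eval_eq (k γA δ βA βI p s v : ℝ) (z : ℂ) :
    (((!![-k, 0, βA*s, βI*s;
          0, -k, βA*v, βI*v;
          (1-p)*k, (1-p)*k, -γA, 0;
          p*k, p*k, 0, -δ] : Matrix (Fin 4) (Fin 4) ℝ).map
        (algebraMap ℝ ℂ)).charpoly).eval z
      = (z + k) * ((z + k)*(z + γA)*(z + δ)
          - k*(s+v)*((1-p)*βA*(z+δ) + p*βI*(z+γA))) := by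
  rw [Matrix.charpoly, ← Polynomial.coe_evalRingHom, RingHom.map_det]
  rw [show ((evalRingHom z).mapMatrix (charmatrix ((!![-k, 0, βA*s, βI*s;
          0, -k, βA*v, βI*v;
          (1-p)*k, (1-p)*k, -γA, 0;
          p*k, p*k, 0, -δ] : Matrix (Fin 4) (Fin 4) ℝ).map
        (algebraMap ℝ ℂ)))) =
      !![z+k, 0, -(βA*s), -(βI*s);
         0, z+k, -(βA*v), -(βI*v);
         -((1-p)*k), -((1-p)*k), z+γA, 0;
         -(p*k), -(p*k), 0, z+δ] from by
    ext i j
    fin_cases i <;> fin_cases j <;>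
      simp [charmatrix_apply, Matrix.map_apply, Complex.ofReal_mul, Complex.ofReal_sub]]
  simp [Matrix.det_succ_row_zero, Fin.sum_univ_succ, Fin.succAbove,
    Matrix.cons_val_succ, Fin.castSucc, Fin.castAdd, Fin.castLE]
  ring

/-- All eigenvalues of `F - V` have negative real part iff `(s+v)·R₀ < 1`. -/
theorem jacobian_stability_iff_Re_lt_one
    (k γA δ βA βI p s v R0 : ℝ)
    (hk : 0 < k) (hγA : 0 < γA) (hδ : 0 < δ)
    (hβA : 0 ≤ βA) (hβI : 0 ≤ βI) (hp : 0 ≤ p) (hp1 : p ≤ 1)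
    (hs : 0 ≤ s) (hv : 0 ≤ v) (hsv : 0 < s + v)
    (hR0 : R0 = (1 - p) * βA / γA + p * βI / δ) (hR0pos : 0 < R0)
    (F V : Matrix (Fin 4) (Fin 4) ℝ)
    (hF : F = !![0, 0, βA * s, βI * s;
                 0, 0, βA * v, βI * v;
                 0, 0, 0, 0;
                 0, 0, 0, 0])
    (hV : V = !![k, 0, 0, 0;
                 0, k, 0, 0;
                 -(1 - p) * k, -(1 - p) * k, γA, 0;
                 -(p * k), -(p * k), 0, δ]) :
    (∀ z : ℂ, ((F - V).map (algebraMap ℝ ℂ)).charpoly.IsRoot z → z.re < 0) ↔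
      (s + v) * R0 < 1 := by
  have hFV : F - V = !![-k, 0, βA*s, βI*s;
          0, -k, βA*v, βI*v;
          (1-p)*k, (1-p)*k, -γA, 0;
          p*k, p*k, 0, -δ] := by
    subst hF hV
    ext i j
    fin_cases i <;> fin_cases j <;> simp [Matrix.sub_apply, Matrix.vecHead, Matrix.vecTail] <;> ring
  rw [hFV]
  -- abbreviations for the cubic coefficients
  set A : ℝ := k + γA + δ with hA_def
  set B : ℝ := k*γA + k*δ + γA*δ - k*(s+v)*((1-p)*βA + p*βI) with hB_def
  set Cc : ℝ := k*γA*δ - k*(s+v)*((1-p)*βA*δ + p*βI*γA) with hC_def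
  have hCval : Cc = k*γA*δ*(1 - (s+v)*R0) := by
    rw [hC_def, hR0]; field_simp
  have hfac : ∀ z : ℂ,
      (((!![-k, 0, βA*s, βI*s;
          0, -k, βA*v, βI*v;
          (1-p)*k, (1-p)*k, -γA, 0;
          p*k, p*k, 0, -δ] : Matrix (Fin 4) (Fin 4) ℝ).map
        (algebraMap ℝ ℂ)).charpoly).eval z
      = (z + k) * (z^3 + (A:ℂ)*z^2 + (B:ℂ)*z + (Cc:ℂ)) := by
    intro z
    rw [charpoly_eval_eq, hA_def, hB_def, hC_def]
    push_cast
    ring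
  constructor
  · -- stability → Rₑ < 1
    intro hstab
    by_contra hge
    push_neg at hge
    have hCle : Cc ≤ 0 := by
      rw [hCval]
      have : 1 - (s+v)*R0 ≤ 0 := by linarith
      nlinarith [mul_pos (mul_pos hk hγA) hδ]
    -- find a nonnegative real root of the cubic by IVT
    set f : ℝ → ℝ := fun x => x^3 + A*x^2 + B*x + Cc with hf_def
    set T : ℝ := 1 + |A| + |B| + |Cc| with hT_def
    have habs := abs_nonneg A
    have hbbs := abs_nonneg B
    have hcbs := abs_nonneg Cc
    have hT1 : 1 ≤ T := by rw [hT_def]; linarith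
    have hfT : 0 < f T := by
      have h1 : |A| ≤ T - 1 := by rw [hT_def]; linarith
      have h2 : |B| ≤ T - 1 := by rw [hT_def]; linarith
      have h3 : |Cc| ≤ T - 1 := by rw [hT_def]; linarith
      have ha1 : -A ≤ |A| := neg_le_abs A
      have ha2 : -B ≤ |B| := neg_le_abs B
      have ha3 : -Cc ≤ |Cc| := neg_le_abs Cc
      have hT0 : 0 < T := by linarith
      simp only [hf_def]
      nlinarith [sq_nonneg T, mul_pos hT0 hT0, sq_nonneg (T-1),
        mul_nonneg (mul_nonneg hT0.le hT0.le) (sub_nonneg.2 hT1)]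
    have hcont : ContinuousOn f (Set.Icc 0 T) := by fun_prop
    have hmem : (0:ℝ) ∈ Set.Icc (f 0) (f T) := by
      constructor
      · simpa [hf_def] using hCle
      · exact hfT.le
    obtain ⟨x0, hx0mem, hx0⟩ := intermediate_value_Icc (by linarith : (0:ℝ) ≤ T) hcont hmem
    have hroot : (((!![-k, 0, βA*s, βI*s;
          0, -k, βA*v, βI*v;
          (1-p)*k, (1-p)*k, -γA, 0;
          p*k, p*k, 0, -δ] : Matrix (Fin 4) (Fin 4) ℝ).map
        (algebraMap ℝ ℂ)).charpoly).IsRoot (x0 : ℂ) := by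
      show _ = _
      rw [hfac]
      have : ((x0:ℂ)^3 + (A:ℂ)*(x0:ℂ)^2 + (B:ℂ)*(x0:ℂ) + (Cc:ℂ)) = ((f x0 : ℝ) : ℂ) := by
        simp only [hf_def]; push_cast; ring
      rw [this, hx0]
      simp
    have := hstab _ hroot
    simp only [Complex.ofReal_re] at this
    exact absurd this (not_lt.2 hx0mem.1)
  · -- Rₑ < 1 → stability
    intro hlt z hz
    have hCpos : 0 < Cc := by
      rw [hCval]
      have h01 : 0 < 1 - (s+v)*R0 := by linarith
      exact mul_pos (mul_pos (mul_pos hk hγA) hδ) h01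
    have hm : k*(s+v)*((1-p)*βA) < k*γA := by
      have hn0 : 0 ≤ k*(s+v)*(p*βI)*γA :=
        mul_nonneg (mul_nonneg (mul_nonneg hk.le hsv.le) (mul_nonneg hp hβI)) hγA.le
      rw [hC_def] at hCpos
      nlinarith
    have hn : k*(s+v)*(p*βI) < k*δ := by
      have hm0 : 0 ≤ k*(s+v)*((1-p)*βA)*δ :=
        mul_nonneg (mul_nonneg (mul_nonneg hk.le hsv.le) (mul_nonneg (by linarith) hβA)) hδ.le
      rw [hC_def] at hCpos
      nlinarith
    have hApos : 0 < A := by rw [hA_def]; linarith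
    have hBpos : 0 < B := by
      rw [hB_def]
      nlinarith [mul_pos hγA hδ]
    have habc : Cc < A * B := by
      have h1 : 0 < (k*γA - k*(s+v)*((1-p)*βA)) * (k + γA) :=
        mul_pos (by linarith) (by linarith)
      have h2 : 0 < (k*δ - k*(s+v)*(p*βI)) * (k + δ) :=
        mul_pos (by linarith) (by linarith)
      have h3 : 0 < γA*δ*(γA + δ + 2*k) := mul_pos (mul_pos hγA hδ) (by linarith)
      rw [hA_def, hB_def, hC_def]
      nlinarith [h1, h2, h3]
    have heval : ((((!![-k, 0, βA*s, βI*s;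
          0, -k, βA*v, βI*v;
          (1-p)*k, (1-p)*k, -γA, 0;
          p*k, p*k, 0, -δ] : Matrix (Fin 4) (Fin 4) ℝ).map
        (algebraMap ℝ ℂ)).charpoly)).eval z = 0 := hz
    rw [hfac] at heval
    rcases mul_eq_zero.1 heval with h0 | h0
    · have : z = -(k:ℂ) := by linear_combination h0
      rw [this]
      simpa using hk
    · exact cubic_hurwitz A B Cc hApos hBpos hCpos habc z h0
end
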